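/- (Cheeger lower bound) For a finite connected subset Ω of a weighted graph, λ₁(Ω) ≥ 1 - √(1 - h(Ω)²). -/

import Mathlib

open Finset

variable {V : Type*}

noncomputable def deg (μ : V → V → ℝ) (x : V) : ℝ := ∑ᶠ y, μ x y

noncomputable def eSum (μ : V → V → ℝ) (A B : Finset V) : ℝ :=
  ∑ x ∈ A, ∑ y ∈ B, μ x y

noncomputable def vol (μ : V → V → ℝ) (U : Finset V) : ℝ := ∑ x ∈ U, deg μ x

noncomputable def bdry (μ : V → V → ℝ) (U : Finset V) : ℝ := vol μ U - eSum μ U U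

noncomputable def cheeger (μ : V → V → ℝ) (Ω : Finset V) : ℝ :=
  sInf {r : ℝ | ∃ U : Finset V, U.Nonempty ∧ U ⊆ Ω ∧ r = bdry μ U / vol μ U}

noncomputable def dualCheeger (μ : V → V → ℝ) (Ω : Finset V) : ℝ :=
  sSup {r : ℝ | ∃ V₁ V₂ : Finset V, V₁.Nonempty ∧ V₂.Nonempty ∧ Disjoint V₁ V₂ ∧
    V₁ ⊆ Ω ∧ V₂ ⊆ Ω ∧ r = 2 * eSum μ V₁ V₂ / (vol μ V₁ + vol μ V₂)}

noncomputable def dLap (μ : V → V → ℝ) (Ω : Finset V) (f : V → ℝ) (x : V) : ℝ :=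
  f x - (1 / deg μ x) * ∑ y ∈ Ω, μ x y * f y

def IsDirEigfun (μ : V → V → ℝ) (Ω : Finset V) (lam : ℝ) (f : V → ℝ) : Prop :=
  (∃ x ∈ Ω, f x ≠ 0) ∧ (∀ x ∉ Ω, f x = 0) ∧ ∀ x ∈ Ω, dLap μ Ω f x = lam * f x

def IsDirEig (μ : V → V → ℝ) (Ω : Finset V) (lam : ℝ) : Prop :=
  ∃ f : V → ℝ, IsDirEigfun μ Ω lam f

noncomputable def lam1 (μ : V → V → ℝ) (Ω : Finset V) : ℝ :=
  sInf {l : ℝ | IsDirEig μ Ω l}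

noncomputable def lamMax (μ : V → V → ℝ) (Ω : Finset V) : ℝ :=
  sSup {l : ℝ | IsDirEig μ Ω l}

def ConnectedOn (μ : V → V → ℝ) (Ω : Finset V) : Prop :=
  ∀ x ∈ Ω, ∀ y ∈ Ω,
    Relation.ReflTransGen (fun a b => a ∈ Ω ∧ b ∈ Ω ∧ μ a b ≠ 0) x y

def BipartiteOn (μ : V → V → ℝ) (Ω : Finset V) : Prop :=
  ∃ U₁ U₂ : Finset V, Disjoint U₁ U₂ ∧ (U₁ : Set V) ∪ ↑U₂ = ↑Ω ∧
    (∀ x ∈ U₁, ∀ y ∈ U₁, μ x y = 0) ∧ (∀ x ∈ U₂, ∀ y ∈ U₂, μ x y = 0)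

set_option linter.unusedVariables false

section Aux

variable (μ : V → V → ℝ)

lemma sum_le_deg (hnn : ∀ x y, 0 ≤ μ x y) (hfin : ∀ x : V, (Function.support (μ x)).Finite)
    (U : Finset V) (x : V) : ∑ y ∈ U, μ x y ≤ deg μ x := by
  classical
  have hdeg : deg μ x = ∑ y ∈ (hfin x).toFinset ∪ U, μ x y := by
    apply finsum_eq_sum_of_support_subset
    intro y hy
    simp only [Finset.coe_union, Set.Finite.coe_toFinset]
    exact Set.mem_union_left _ hy
  rw [hdeg]
  exact Finset.sum_le_sum_of_subset_of_nonneg Finset.subset_union_right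
    (fun y _ _ => hnn x y)

lemma bdry_eq (U : Finset V) : bdry μ U = ∑ x ∈ U, (deg μ x - ∑ y ∈ U, μ x y) := by
  rw [bdry, vol, eSum, ← Finset.sum_sub_distrib]

lemma bdry_nonneg (hnn : ∀ x y, 0 ≤ μ x y) (hfin : ∀ x : V, (Function.support (μ x)).Finite)
    (U : Finset V) : 0 ≤ bdry μ U := by
  rw [bdry_eq]
  exact Finset.sum_nonneg fun x _ => sub_nonneg.2 (sum_le_deg μ hnn hfin U x)

lemma vol_nonneg (hdeg : ∀ x : V, 0 < deg μ x) (U : Finset V) : 0 ≤ vol μ U :=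
  Finset.sum_nonneg fun x _ => (hdeg x).le

lemma vol_pos (hdeg : ∀ x : V, 0 < deg μ x) {U : Finset V} (hU : U.Nonempty) : 0 < vol μ U :=
  Finset.sum_pos (fun x _ => hdeg x) hU

lemma cheeger_nonneg (hnn : ∀ x y, 0 ≤ μ x y) (hfin : ∀ x : V, (Function.support (μ x)).Finite)
    (hdeg : ∀ x : V, 0 < deg μ x) (Ω : Finset V) (hΩ : Ω.Nonempty) : 0 ≤ cheeger μ Ω := by
  refine le_csInf ⟨bdry μ Ω / vol μ Ω, Ω, hΩ, Finset.Subset.refl Ω, rfl⟩ ?_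
  rintro r ⟨U, hU, hUΩ, rfl⟩
  exact div_nonneg (bdry_nonneg μ hnn hfin U) (vol_nonneg μ hdeg U)

lemma cheeger_mul_vol_le (hnn : ∀ x y, 0 ≤ μ x y) (hfin : ∀ x : V, (Function.support (μ x)).Finite)
    (hdeg : ∀ x : V, 0 < deg μ x) (Ω : Finset V) {U : Finset V} (hU : U.Nonempty)
    (hUΩ : U ⊆ Ω) : cheeger μ Ω * vol μ U ≤ bdry μ U := by
  have hvol : 0 < vol μ U := vol_pos μ hdeg hU
  have h1 : cheeger μ Ω ≤ bdry μ U / vol μ U := by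
    apply csInf_le
    · refine ⟨0, ?_⟩
      rintro r ⟨W, hW, hWΩ, rfl⟩
      exact div_nonneg (bdry_nonneg μ hnn hfin W) (vol_nonneg μ hdeg W)
    · exact ⟨U, hU, hUΩ, rfl⟩
  calc cheeger μ Ω * vol μ U ≤ (bdry μ U / vol μ U) * vol μ U :=
        mul_le_mul_of_nonneg_right h1 hvol.le
    _ = bdry μ U := div_mul_cancel₀ _ hvol.ne'

lemma slice_indicator (a c : ℝ) :
    (fun t : ℝ => if t < a then c else 0) = Set.indicator (Set.Iio a) (fun _ => c) := by
  ext t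
  simp [Set.indicator_apply]

lemma slice_integrable (a c T : ℝ) :
    MeasureTheory.IntegrableOn (fun t => if t < a then c else 0) (Set.Ioc 0 T) := by
  rw [slice_indicator]
  exact (MeasureTheory.integrableOn_const (C := c)
    (by rw [Real.volume_Ioc]; exact ENNReal.ofReal_ne_top)).indicator
    measurableSet_Iio

lemma slice_integral {a T : ℝ} (c : ℝ) (ha : 0 ≤ a) (haT : a ≤ T) :
    ∫ t in Set.Ioc 0 T, (if t < a then c else 0) = c * a := by
  rw [slice_indicator, MeasureTheory.integral_indicator measurableSet_Iio,
    MeasureTheory.Measure.restrict_restrict measurableSet_Iio]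
  have hset : Set.Iio a ∩ Set.Ioc 0 T = Set.Ioo 0 a := by
    ext t
    simp only [Set.mem_inter_iff, Set.mem_Iio, Set.mem_Ioc, Set.mem_Ioo]
    constructor
    · rintro ⟨h1, h2, h3⟩; exact ⟨h2, h1⟩
    · rintro ⟨h1, h2⟩; exact ⟨h2, h1, by linarith⟩
  rw [hset, MeasureTheory.setIntegral_const, Real.volume_real_Ioo_of_le ha, smul_eq_mul,
    mul_comm]
  ring

end Aux

section Coarea

variable (μ : V → V → ℝ)

lemma coarea (hnn : ∀ x y, 0 ≤ μ x y) (hfin : ∀ x : V, (Function.support (μ x)).Finite)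
    (hdeg : ∀ x : V, 0 < deg μ x) (Ω : Finset V) (g : V → ℝ) :
    cheeger μ Ω * ∑ x ∈ Ω, deg μ x * g x ^ 2 ≤
      (∑ x ∈ Ω, deg μ x * g x ^ 2) - ∑ x ∈ Ω, ∑ y ∈ Ω, μ x y * min (g x ^ 2) (g y ^ 2) := by
  classical
  set T : ℝ := 1 + ∑ x ∈ Ω, g x ^ 2 with hTdef
  have hle : ∀ x ∈ Ω, g x ^ 2 ≤ T := by
    intro x hx
    have h : g x ^ 2 ≤ ∑ x ∈ Ω, g x ^ 2 :=
      Finset.single_le_sum (fun i _ => sq_nonneg (g i)) hx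
    simp only [hTdef]; linarith
  set U : ℝ → Finset V := fun t => Ω.filter (fun x => t < g x ^ 2) with hUdef
  have hvol : ∀ t, vol μ (U t) = ∑ x ∈ Ω, (if t < g x ^ 2 then deg μ x else 0) := by
    intro t; rw [vol, hUdef]; rw [Finset.sum_filter]
  have hesum : ∀ t, eSum μ (U t) (U t)
      = ∑ x ∈ Ω, ∑ y ∈ Ω, (if t < min (g x ^ 2) (g y ^ 2) then μ x y else 0) := by
    intro t
    rw [eSum, hUdef, Finset.sum_filter]
    refine Finset.sum_congr rfl fun x _ => ?_
    by_cases h : t < g x ^ 2 <;> simp [Finset.sum_filter, lt_min_iff, h]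
  have hintvol : MeasureTheory.IntegrableOn (fun t => vol μ (U t)) (Set.Ioc 0 T) := by
    rw [show (fun t => vol μ (U t)) = fun t => ∑ x ∈ Ω, (if t < g x ^ 2 then deg μ x else 0)
      from funext hvol]
    exact MeasureTheory.integrable_finset_sum _ (fun x _ => slice_integrable _ _ _)
  have hintesum : MeasureTheory.IntegrableOn (fun t => eSum μ (U t) (U t)) (Set.Ioc 0 T) := by
    rw [show (fun t => eSum μ (U t) (U t))
      = fun t => ∑ x ∈ Ω, ∑ y ∈ Ω, (if t < min (g x ^ 2) (g y ^ 2) then μ x y else 0)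
      from funext hesum]
    exact MeasureTheory.integrable_finset_sum _
      (fun x _ => MeasureTheory.integrable_finset_sum _ (fun y _ => slice_integrable _ _ _))
  have hIvol : ∫ t in Set.Ioc 0 T, vol μ (U t) = ∑ x ∈ Ω, deg μ x * g x ^ 2 := by
    simp only [hvol]
    rw [MeasureTheory.integral_finset_sum _ (fun x _ => slice_integrable _ _ _)]
    exact Finset.sum_congr rfl fun x hx => slice_integral _ (sq_nonneg _) (hle x hx)
  have hIesum : ∫ t in Set.Ioc 0 T, eSum μ (U t) (U t)
      = ∑ x ∈ Ω, ∑ y ∈ Ω, μ x y * min (g x ^ 2) (g y ^ 2) := by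
    simp only [hesum]
    rw [MeasureTheory.integral_finset_sum _
      (fun x _ => MeasureTheory.integrable_finset_sum _ (fun y _ => slice_integrable _ _ _))]
    refine Finset.sum_congr rfl fun x hx => ?_
    rw [MeasureTheory.integral_finset_sum _ (fun y _ => slice_integrable _ _ _)]
    refine Finset.sum_congr rfl fun y hy => ?_
    exact slice_integral _ (le_min (sq_nonneg _) (sq_nonneg _))
      ((min_le_left _ _).trans (hle x hx))
  have hpt : ∀ t ∈ Set.Ioc (0:ℝ) T,
      cheeger μ Ω * vol μ (U t) ≤ vol μ (U t) - eSum μ (U t) (U t) := by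
    intro t _
    rcases (U t).eq_empty_or_nonempty with he | hne
    · simp [he, vol, eSum]
    · have := cheeger_mul_vol_le μ hnn hfin hdeg Ω hne (Finset.filter_subset _ _)
      rw [bdry] at this
      exact this
  calc cheeger μ Ω * ∑ x ∈ Ω, deg μ x * g x ^ 2
      = ∫ t in Set.Ioc 0 T, cheeger μ Ω * vol μ (U t) := by
        rw [MeasureTheory.integral_const_mul, hIvol]
    _ ≤ ∫ t in Set.Ioc 0 T, (vol μ (U t) - eSum μ (U t) (U t)) :=
        MeasureTheory.setIntegral_mono_on (hintvol.const_mul _) (hintvol.sub hintesum)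
          measurableSet_Ioc hpt
    _ = (∑ x ∈ Ω, deg μ x * g x ^ 2) - ∑ x ∈ Ω, ∑ y ∈ Ω, μ x y * min (g x ^ 2) (g y ^ 2) := by
        rw [MeasureTheory.integral_sub hintvol hintesum, hIvol, hIesum]

end Coarea

section Algebra

variable (μ : V → V → ℝ) (Ω : Finset V) (g : V → ℝ)

lemma swap_sq (hsymm : ∀ x y, μ x y = μ y x) :
    ∑ x ∈ Ω, ∑ y ∈ Ω, μ x y * g y ^ 2 = ∑ x ∈ Ω, ∑ y ∈ Ω, μ x y * g x ^ 2 := by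
  rw [Finset.sum_comm]
  exact Finset.sum_congr rfl fun y _ => Finset.sum_congr rfl fun x _ => by rw [hsymm]

lemma sum_sigma_sq : ∑ x ∈ Ω, ∑ y ∈ Ω, μ x y * g x ^ 2
    = ∑ x ∈ Ω, (∑ y ∈ Ω, μ x y) * g x ^ 2 := by
  exact Finset.sum_congr rfl fun x _ => by rw [Finset.sum_mul]

lemma sum_cross : ∑ x ∈ Ω, ∑ y ∈ Ω, μ x y * (g x * g y)
    = ∑ x ∈ Ω, g x * ∑ y ∈ Ω, μ x y * g y := by
  refine Finset.sum_congr rfl fun x _ => ?_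
  rw [Finset.mul_sum]
  exact Finset.sum_congr rfl fun y _ => by ring

lemma expand_minus (hsymm : ∀ x y, μ x y = μ y x) :
    (∑ x ∈ Ω, ∑ y ∈ Ω, μ x y / 2 * (g x - g y) ^ 2)
      + ∑ x ∈ Ω, (deg μ x - ∑ y ∈ Ω, μ x y) * g x ^ 2
    = (∑ x ∈ Ω, deg μ x * g x ^ 2) - ∑ x ∈ Ω, g x * ∑ y ∈ Ω, μ x y * g y := by
  have f1 : ∑ x ∈ Ω, ∑ y ∈ Ω, μ x y / 2 * (g x - g y) ^ 2
      = (∑ x ∈ Ω, ∑ y ∈ Ω, μ x y * g x ^ 2) / 2 + (∑ x ∈ Ω, ∑ y ∈ Ω, μ x y * g y ^ 2) / 2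
        - ∑ x ∈ Ω, ∑ y ∈ Ω, μ x y * (g x * g y) := by
    simp only [Finset.sum_div, ← Finset.sum_add_distrib, ← Finset.sum_sub_distrib]
    exact Finset.sum_congr rfl fun x _ => Finset.sum_congr rfl fun y _ => by ring
  have f2 := swap_sq μ Ω g hsymm
  have f3 := sum_sigma_sq μ Ω g
  have f4 := sum_cross μ Ω g
  have f5 : ∑ x ∈ Ω, (deg μ x - ∑ y ∈ Ω, μ x y) * g x ^ 2
      = (∑ x ∈ Ω, deg μ x * g x ^ 2) - ∑ x ∈ Ω, (∑ y ∈ Ω, μ x y) * g x ^ 2 := by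
    rw [← Finset.sum_sub_distrib]
    exact Finset.sum_congr rfl fun x _ => by ring
  rw [f1, f2, f3, f4, f5]
  ring

lemma expand_plus (hsymm : ∀ x y, μ x y = μ y x) :
    (∑ x ∈ Ω, ∑ y ∈ Ω, μ x y / 2 * (g x + g y) ^ 2)
      + ∑ x ∈ Ω, (deg μ x - ∑ y ∈ Ω, μ x y) * g x ^ 2
    = (∑ x ∈ Ω, deg μ x * g x ^ 2) + ∑ x ∈ Ω, g x * ∑ y ∈ Ω, μ x y * g y := by
  have f1 : ∑ x ∈ Ω, ∑ y ∈ Ω, μ x y / 2 * (g x + g y) ^ 2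
      = (∑ x ∈ Ω, ∑ y ∈ Ω, μ x y * g x ^ 2) / 2 + (∑ x ∈ Ω, ∑ y ∈ Ω, μ x y * g y ^ 2) / 2
        + ∑ x ∈ Ω, ∑ y ∈ Ω, μ x y * (g x * g y) := by
    simp only [Finset.sum_div, ← Finset.sum_add_distrib]
    exact Finset.sum_congr rfl fun x _ => Finset.sum_congr rfl fun y _ => by ring
  have f2 := swap_sq μ Ω g hsymm
  have f3 := sum_sigma_sq μ Ω g
  have f4 := sum_cross μ Ω g
  have f5 : ∑ x ∈ Ω, (deg μ x - ∑ y ∈ Ω, μ x y) * g x ^ 2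
      = (∑ x ∈ Ω, deg μ x * g x ^ 2) - ∑ x ∈ Ω, (∑ y ∈ Ω, μ x y) * g x ^ 2 := by
    rw [← Finset.sum_sub_distrib]
    exact Finset.sum_congr rfl fun x _ => by ring
  rw [f1, f2, f3, f4, f5]
  ring

lemma symmetrize_min (hsymm : ∀ x y, μ x y = μ y x) :
    ∑ x ∈ Ω, ∑ y ∈ Ω, μ x y * (g x ^ 2 - min (g x ^ 2) (g y ^ 2))
    = ∑ x ∈ Ω, ∑ y ∈ Ω, μ x y / 2 * |g x ^ 2 - g y ^ 2| := by
  have hmin : ∀ a b : ℝ, a - min a b = |a - b| / 2 + (a - b) / 2 := by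
    intro a b
    rcases le_total a b with h | h
    · rw [min_eq_left h, abs_of_nonpos (by linarith)]; ring
    · rw [min_eq_right h, abs_of_nonneg (by linarith)]; ring
  have f1 : ∑ x ∈ Ω, ∑ y ∈ Ω, μ x y * (g x ^ 2 - min (g x ^ 2) (g y ^ 2))
      = (∑ x ∈ Ω, ∑ y ∈ Ω, μ x y / 2 * |g x ^ 2 - g y ^ 2|)
        + ((∑ x ∈ Ω, ∑ y ∈ Ω, μ x y * g x ^ 2) - ∑ x ∈ Ω, ∑ y ∈ Ω, μ x y * g y ^ 2) / 2 := by
    simp only [Finset.sum_div, ← Finset.sum_add_distrib, ← Finset.sum_sub_distrib]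
    refine Finset.sum_congr rfl fun x _ => Finset.sum_congr rfl fun y _ => ?_
    rw [hmin]
    ring
  rw [f1, swap_sq μ Ω g hsymm]
  ring

end Algebra

section Eig

variable (μ : V → V → ℝ) (Ω : Finset V)

lemma neg_eigfun {l : ℝ} {f : V → ℝ} (hf : IsDirEigfun μ Ω l f) :
    IsDirEigfun μ Ω l (fun x => -f x) := by
  obtain ⟨⟨x₀, hx₀, hfx₀⟩, hzero, heig⟩ := hf
  refine ⟨⟨x₀, hx₀, by simpa using hfx₀⟩, fun x hx => by simp [hzero x hx], fun x hx => ?_⟩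
  have h := heig x hx
  rw [dLap] at h ⊢
  have hs : ∑ y ∈ Ω, μ x y * -f y = -∑ y ∈ Ω, μ x y * f y := by
    rw [← Finset.sum_neg_distrib]
    exact Finset.sum_congr rfl fun y _ => by ring
  rw [hs]
  ring_nf
  ring_nf at h
  linarith

/-- eigen-equation at one vertex, multiplied through. -/
lemma eig_vertex (hdeg : ∀ x : V, 0 < deg μ x) {l : ℝ} {f : V → ℝ}
    (heig : ∀ x ∈ Ω, dLap μ Ω f x = l * f x) {x : V} (hx : x ∈ Ω) :
    deg μ x * f x - ∑ y ∈ Ω, μ x y * f y = deg μ x * (l * f x) := by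
  have h := heig x hx
  rw [dLap] at h
  have hd := (hdeg x).ne'
  have h' : deg μ x * (f x - 1 / deg μ x * ∑ y ∈ Ω, μ x y * f y) = deg μ x * (l * f x) := by
    rw [h]
  rw [mul_sub, show deg μ x * (1 / deg μ x * ∑ y ∈ Ω, μ x y * f y)
    = ∑ y ∈ Ω, μ x y * f y by field_simp] at h'
  exact h'

lemma eigen_sum (hdeg : ∀ x : V, 0 < deg μ x) {l : ℝ} {f : V → ℝ}
    (heig : ∀ x ∈ Ω, dLap μ Ω f x = l * f x) :
    (∑ x ∈ Ω, deg μ x * f x ^ 2) - (∑ x ∈ Ω, f x * ∑ y ∈ Ω, μ x y * f y)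
      = l * ∑ x ∈ Ω, deg μ x * f x ^ 2 := by
  rw [← Finset.sum_sub_distrib, Finset.mul_sum]
  refine Finset.sum_congr rfl fun x hx => ?_
  have h := eig_vertex μ Ω hdeg heig hx
  have h2 : f x * (deg μ x * f x - ∑ y ∈ Ω, μ x y * f y) = f x * (deg μ x * (l * f x)) := by
    rw [h]
  linear_combination h2

lemma sum_deg_sq_pos (hdeg : ∀ x : V, 0 < deg μ x) {f : V → ℝ} {x₀ : V} (hx₀ : x₀ ∈ Ω)
    (hfx₀ : f x₀ ≠ 0) : 0 < ∑ x ∈ Ω, deg μ x * f x ^ 2 := by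
  refine Finset.sum_pos' (fun x _ => mul_nonneg (hdeg x).le (sq_nonneg _)) ⟨x₀, hx₀, ?_⟩
  have : 0 < f x₀ ^ 2 := lt_of_le_of_ne (sq_nonneg _) (Ne.symm (pow_ne_zero 2 hfx₀))
  exact mul_pos (hdeg x₀) this

lemma eig_nonneg (hsymm : ∀ x y, μ x y = μ y x) (hnn : ∀ x y, 0 ≤ μ x y)
    (hfin : ∀ x : V, (Function.support (μ x)).Finite) (hdeg : ∀ x : V, 0 < deg μ x)
    {l : ℝ} {f : V → ℝ} (hf : IsDirEigfun μ Ω l f) : 0 ≤ l := by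
  obtain ⟨⟨x₀, hx₀, hfx₀⟩, hzero, heig⟩ := hf
  have hsum := eigen_sum μ Ω hdeg heig
  have hD := sum_deg_sq_pos μ Ω hdeg hx₀ hfx₀
  have hA : 0 ≤ (∑ x ∈ Ω, deg μ x * f x ^ 2) - ∑ x ∈ Ω, f x * ∑ y ∈ Ω, μ x y * f y := by
    rw [← expand_minus μ Ω f hsymm]
    refine add_nonneg (Finset.sum_nonneg fun x _ => Finset.sum_nonneg fun y _ => ?_)
      (Finset.sum_nonneg fun x _ => mul_nonneg ?_ (sq_nonneg _))
    · exact mul_nonneg (by linarith [hnn x y]) (sq_nonneg _)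
    · exact sub_nonneg.2 (sum_le_deg μ hnn hfin Ω x)
  nlinarith

/-- the positive part of an eigenfunction nearly satisfies the eigen-inequality. -/
lemma pospart_bound (hnn : ∀ x y, 0 ≤ μ x y) (hdeg : ∀ x : V, 0 < deg μ x)
    {l : ℝ} {f : V → ℝ} (heig : ∀ x ∈ Ω, dLap μ Ω f x = l * f x) :
    (∑ x ∈ Ω, deg μ x * (max (f x) 0) ^ 2)
      - (∑ x ∈ Ω, (max (f x) 0) * ∑ y ∈ Ω, μ x y * (max (f y) 0))
    ≤ l * ∑ x ∈ Ω, deg μ x * (max (f x) 0) ^ 2 := by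
  rw [← Finset.sum_sub_distrib, Finset.mul_sum]
  refine Finset.sum_le_sum fun x hx => ?_
  rcases le_or_gt (f x) 0 with hfx | hfx
  · rw [max_eq_right hfx]
    simp
  · rw [max_eq_left hfx.le]
    have hS : ∑ y ∈ Ω, μ x y * f y ≤ ∑ y ∈ Ω, μ x y * (max (f y) 0) :=
      Finset.sum_le_sum fun y _ => mul_le_mul_of_nonneg_left (le_max_left _ _) (hnn x y)
    have h := eig_vertex μ Ω hdeg heig hx
    have h2 : f x * (deg μ x * f x - ∑ y ∈ Ω, μ x y * f y) = f x * (deg μ x * (l * f x)) := by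
      rw [h]
    nlinarith [mul_le_mul_of_nonneg_left hS hfx.le]

end Eig

section Spectral

open Matrix

variable (μ : V → V → ℝ)

lemma exists_lam1_eigfun (hsymm : ∀ x y, μ x y = μ y x) (hdeg : ∀ x : V, 0 < deg μ x)
    (Ω : Finset V) (hΩ : Ω.Nonempty) :
    ∃ f : V → ℝ, IsDirEigfun μ Ω (lam1 μ Ω) f := by
  classical
  haveI : Nonempty {x // x ∈ Ω} := ⟨⟨hΩ.choose, hΩ.choose_spec⟩⟩
  have sqrt_pos : ∀ x : V, 0 < Real.sqrt (deg μ x) := fun x => Real.sqrt_pos.2 (hdeg x)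
  set B : Matrix {x // x ∈ Ω} {x // x ∈ Ω} ℝ :=
    fun i j => μ i.1 j.1 / (Real.sqrt (deg μ i.1) * Real.sqrt (deg μ j.1)) with hBdef
  have hB : B.IsHermitian := by
    show B.conjTranspose = B
    ext i j
    rw [Matrix.conjTranspose_apply, star_trivial]; simp only [hBdef]
    rw [hsymm j.1 i.1]
    ring
  -- forward: eigenpair of B gives a Dirichlet eigenvalue 1 - β
  have key : ∀ (β : ℝ) (v : {x // x ∈ Ω} → ℝ), v ≠ 0 → B *ᵥ v = β • v →
      IsDirEig μ Ω (1 - β) := by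
    intro β v hv hBv
    set f : V → ℝ := fun x => if h : x ∈ Ω then v ⟨x, h⟩ / Real.sqrt (deg μ x) else 0 with hfdef
    refine ⟨f, ⟨?_, ?_, ?_⟩⟩
    · obtain ⟨j, hj⟩ := Function.ne_iff.mp hv
      refine ⟨j.1, j.2, ?_⟩
      simp only [hfdef, dif_pos j.2, Subtype.coe_eta]
      exact div_ne_zero hj (sqrt_pos _).ne'
    · intro x hx; simp [hfdef, hx]
    · intro x hx
      have hsum : ∑ y ∈ Ω, μ x y * f y = Real.sqrt (deg μ x) * (β * v ⟨x, hx⟩) := by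
        have h1 : ∑ y ∈ Ω, μ x y * f y
            = ∑ j : {x // x ∈ Ω}, μ x j.1 * (v j / Real.sqrt (deg μ j.1)) := by
          rw [← Finset.sum_coe_sort Ω (fun y => μ x y * f y)]
          refine Finset.sum_congr rfl fun j _ => ?_
          simp only [hfdef, dif_pos j.2, Subtype.coe_eta]
        have h2 : (B *ᵥ v) ⟨x, hx⟩ = β * v ⟨x, hx⟩ := by rw [hBv]; simp
        have h3 : (B *ᵥ v) ⟨x, hx⟩ = ∑ j, B ⟨x, hx⟩ j * v j := by
          simp [Matrix.mulVec, dotProduct]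
        rw [h1, ← h2, h3, Finset.mul_sum]
        refine Finset.sum_congr rfl fun j _ => ?_
        simp only [hBdef]
        have hx' : Real.sqrt (deg μ x) ≠ 0 := (sqrt_pos x).ne'
        have hj' : Real.sqrt (deg μ j.1) ≠ 0 := (sqrt_pos j.1).ne'
        field_simp
      rw [dLap, hsum]
      have hdx := (hdeg x).ne'
      have hsq : Real.sqrt (deg μ x) * Real.sqrt (deg μ x) = deg μ x :=
        Real.mul_self_sqrt (hdeg x).le
      have hx' : Real.sqrt (deg μ x) ≠ 0 := (sqrt_pos x).ne'
      simp only [hfdef, dif_pos hx]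
      rw [show (1 / deg μ x) * (Real.sqrt (deg μ x) * (β * v ⟨x, hx⟩))
        = β * v ⟨x, hx⟩ / Real.sqrt (deg μ x) by
          nth_rw 1 [← hsq]
          rw [one_div, mul_inv, ← mul_assoc, mul_assoc (Real.sqrt (deg μ x))⁻¹,
            inv_mul_cancel₀ hx', mul_one]
          ring]
      ring
  -- backward: every Dirichlet eigenvalue l gives eigenvalue 1 - l of B
  have key2 : ∀ l : ℝ, IsDirEig μ Ω l → Module.End.HasEigenvalue (Matrix.mulVecLin B) (1 - l) := by
    rintro l ⟨f, ⟨x₀, hx₀, hfx₀⟩, hzero, heig⟩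
    set v : {x // x ∈ Ω} → ℝ := fun j => Real.sqrt (deg μ j.1) * f j.1 with hvdef
    have hv : v ≠ 0 := Function.ne_iff.2 ⟨⟨x₀, hx₀⟩, mul_ne_zero (sqrt_pos _).ne' hfx₀⟩
    have hBv : B *ᵥ v = (1 - l) • v := by
      funext i
      obtain ⟨x, hx⟩ := i
      have hS : ∑ y ∈ Ω, μ x y * f y = deg μ x * ((1 - l) * f x) := by
        have h := eig_vertex μ Ω hdeg heig hx
        linear_combination -h
      have h3 : (B *ᵥ v) ⟨x, hx⟩ = ∑ j, B ⟨x, hx⟩ j * v j := by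
        simp [Matrix.mulVec, dotProduct]
      have h4 : ∑ j : {x // x ∈ Ω}, B ⟨x, hx⟩ j * v j
          = (∑ y ∈ Ω, μ x y * f y) / Real.sqrt (deg μ x) := by
        rw [← Finset.sum_coe_sort Ω (fun y => μ x y * f y), Finset.sum_div]
        refine Finset.sum_congr rfl fun j _ => ?_
        simp only [hBdef, hvdef]
        have hx' : Real.sqrt (deg μ x) ≠ 0 := (sqrt_pos x).ne'
        have hj' : Real.sqrt (deg μ j.1) ≠ 0 := (sqrt_pos j.1).ne'
        field_simp
      have hsq : Real.sqrt (deg μ x) * Real.sqrt (deg μ x) = deg μ x :=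
        Real.mul_self_sqrt (hdeg x).le
      have hx' : Real.sqrt (deg μ x) ≠ 0 := (sqrt_pos x).ne'
      show (B *ᵥ v) ⟨x, hx⟩ = (1 - l) * v ⟨x, hx⟩
      rw [h3, h4, hS, hvdef]
      rw [div_eq_iff hx']
      linear_combination (-((1 - l) * f x)) * hsq
    refine Module.End.hasEigenvalue_of_hasEigenvector ⟨Module.End.mem_eigenspace_iff.2 ?_, hv⟩
    rw [Matrix.mulVecLin_apply, hBv]
  set S : Set ℝ := {l : ℝ | IsDirEig μ Ω l} with hSdef
  have hSne : S.Nonempty := by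
    have i : {x // x ∈ Ω} := Classical.arbitrary _
    have hmul := hB.mulVec_eigenvectorBasis i
    have hne : (⇑(hB.eigenvectorBasis i) : {x // x ∈ Ω} → ℝ) ≠ 0 := by
      intro hc
      apply hB.eigenvectorBasis.orthonormal.ne_zero i
      ext j
      exact congrFun hc j
    exact ⟨_, key _ _ hne hmul⟩
  have hSsub : S ⊆ (fun β => 1 - β) '' {β : ℝ | Module.End.HasEigenvalue (Matrix.mulVecLin B) β} :=
    fun l hl => ⟨1 - l, key2 l hl, by ring⟩
  have hSfin : S.Finite :=
    Set.Finite.subset ((Module.End.finite_hasEigenvalue (Matrix.mulVecLin B)).image _) hSsub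
  have hmem : lam1 μ Ω ∈ S := hSne.csInf_mem hSfin
  exact hmem

end Spectral

section CS

variable (μ : V → V → ℝ) (Ω : Finset V) (g : V → ℝ)

lemma W_split : ∑ x ∈ Ω, (deg μ x - ∑ y ∈ Ω, μ x y) * g x ^ 2
    = (∑ x ∈ Ω, deg μ x * g x ^ 2) - ∑ x ∈ Ω, (∑ y ∈ Ω, μ x y) * g x ^ 2 := by
  rw [← Finset.sum_sub_distrib]
  exact Finset.sum_congr rfl fun x _ => by ring

lemma cs_bound (hsymm : ∀ x y, μ x y = μ y x) (hnn : ∀ x y, 0 ≤ μ x y)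
    (hfin : ∀ x : V, (Function.support (μ x)).Finite) (hg0 : ∀ x, 0 ≤ g x) :
    ((∑ x ∈ Ω, deg μ x * g x ^ 2) - ∑ x ∈ Ω, ∑ y ∈ Ω, μ x y * min (g x ^ 2) (g y ^ 2)) ^ 2
    ≤ ((∑ x ∈ Ω, deg μ x * g x ^ 2) - ∑ x ∈ Ω, g x * ∑ y ∈ Ω, μ x y * g y)
      * ((∑ x ∈ Ω, deg μ x * g x ^ 2) + ∑ x ∈ Ω, g x * ∑ y ∈ Ω, μ x y * g y) := by
  classical
  have hw : ∀ x : V, 0 ≤ deg μ x - ∑ y ∈ Ω, μ x y :=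
    fun x => sub_nonneg.2 (sum_le_deg μ hnn hfin Ω x)
  set F : V × V ⊕ V → ℝ := Sum.elim
    (fun p => Real.sqrt (μ p.1 p.2 / 2) * |g p.1 - g p.2|)
    (fun x => Real.sqrt (deg μ x - ∑ y ∈ Ω, μ x y) * g x) with hFdef
  set G : V × V ⊕ V → ℝ := Sum.elim
    (fun p => Real.sqrt (μ p.1 p.2 / 2) * (g p.1 + g p.2))
    (fun x => Real.sqrt (deg μ x - ∑ y ∈ Ω, μ x y) * g x) with hGdef
  set s : Finset (V × V ⊕ V) := (Ω ×ˢ Ω).disjSum Ω with hsdef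
  have hWsq : ∀ x : V, Real.sqrt (deg μ x - ∑ y ∈ Ω, μ x y) * g x
      * (Real.sqrt (deg μ x - ∑ y ∈ Ω, μ x y) * g x)
      = (deg μ x - ∑ y ∈ Ω, μ x y) * g x ^ 2 := by
    intro x
    rw [show Real.sqrt (deg μ x - ∑ y ∈ Ω, μ x y) * g x
      * (Real.sqrt (deg μ x - ∑ y ∈ Ω, μ x y) * g x)
      = Real.sqrt (deg μ x - ∑ y ∈ Ω, μ x y) * Real.sqrt (deg μ x - ∑ y ∈ Ω, μ x y) * g x ^ 2
      by ring, Real.mul_self_sqrt (hw x)]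
  -- the middle sum
  have hFG : ∑ z ∈ s, F z * G z
      = (∑ x ∈ Ω, ∑ y ∈ Ω, μ x y / 2 * |g x ^ 2 - g y ^ 2|)
        + ∑ x ∈ Ω, (deg μ x - ∑ y ∈ Ω, μ x y) * g x ^ 2 := by
    rw [hsdef, Finset.sum_disjSum]
    congr 1
    · rw [Finset.sum_product]
      refine Finset.sum_congr rfl fun x _ => Finset.sum_congr rfl fun y _ => ?_
      simp only [hFdef, hGdef, Sum.elim_inl]
      rw [show Real.sqrt (μ x y / 2) * |g x - g y| * (Real.sqrt (μ x y / 2) * (g x + g y))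
        = Real.sqrt (μ x y / 2) * Real.sqrt (μ x y / 2) * (|g x - g y| * (g x + g y)) by ring,
        Real.mul_self_sqrt (by linarith [hnn x y])]
      have habs : |g x - g y| * (g x + g y) = |g x ^ 2 - g y ^ 2| := by
        rw [show g x ^ 2 - g y ^ 2 = (g x - g y) * (g x + g y) by ring, abs_mul,
          abs_of_nonneg (add_nonneg (hg0 x) (hg0 y))]
      rw [habs]
    · exact Finset.sum_congr rfl fun x _ => by
        simp only [hFdef, hGdef, Sum.elim_inr]; exact hWsq x
  have hF2 : ∑ z ∈ s, F z ^ 2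
      = (∑ x ∈ Ω, deg μ x * g x ^ 2) - ∑ x ∈ Ω, g x * ∑ y ∈ Ω, μ x y * g y := by
    rw [hsdef, Finset.sum_disjSum, ← expand_minus μ Ω g hsymm]
    congr 1
    · rw [Finset.sum_product]
      refine Finset.sum_congr rfl fun x _ => Finset.sum_congr rfl fun y _ => ?_
      simp only [hFdef, Sum.elim_inl]
      rw [mul_pow, Real.sq_sqrt (by linarith [hnn x y]), sq_abs]
    · refine Finset.sum_congr rfl fun x _ => ?_
      simp only [hFdef, Sum.elim_inr]
      rw [mul_pow, Real.sq_sqrt (hw x)]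
  have hG2 : ∑ z ∈ s, G z ^ 2
      = (∑ x ∈ Ω, deg μ x * g x ^ 2) + ∑ x ∈ Ω, g x * ∑ y ∈ Ω, μ x y * g y := by
    rw [hsdef, Finset.sum_disjSum, ← expand_plus μ Ω g hsymm]
    congr 1
    · rw [Finset.sum_product]
      refine Finset.sum_congr rfl fun x _ => Finset.sum_congr rfl fun y _ => ?_
      simp only [hGdef, Sum.elim_inl]
      rw [mul_pow, Real.sq_sqrt (by linarith [hnn x y])]
    · refine Finset.sum_congr rfl fun x _ => ?_
      simp only [hGdef, Sum.elim_inr]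
      rw [mul_pow, Real.sq_sqrt (hw x)]
  -- rewrite D - M
  have hDM : (∑ x ∈ Ω, deg μ x * g x ^ 2) - ∑ x ∈ Ω, ∑ y ∈ Ω, μ x y * min (g x ^ 2) (g y ^ 2)
      = ∑ z ∈ s, F z * G z := by
    have h1 : (∑ x ∈ Ω, deg μ x * g x ^ 2) - ∑ x ∈ Ω, ∑ y ∈ Ω, μ x y * min (g x ^ 2) (g y ^ 2)
        = (∑ x ∈ Ω, ∑ y ∈ Ω, μ x y * (g x ^ 2 - min (g x ^ 2) (g y ^ 2)))
          + ∑ x ∈ Ω, (deg μ x - ∑ y ∈ Ω, μ x y) * g x ^ 2 := by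
      have h2 : ∑ x ∈ Ω, ∑ y ∈ Ω, μ x y * (g x ^ 2 - min (g x ^ 2) (g y ^ 2))
          = (∑ x ∈ Ω, ∑ y ∈ Ω, μ x y * g x ^ 2)
            - ∑ x ∈ Ω, ∑ y ∈ Ω, μ x y * min (g x ^ 2) (g y ^ 2) := by
        simp only [← Finset.sum_sub_distrib]
        exact Finset.sum_congr rfl fun x _ => Finset.sum_congr rfl fun y _ => by ring
      rw [h2, W_split μ Ω g, sum_sigma_sq μ Ω g]
      ring
    rw [h1, symmetrize_min μ Ω g hsymm, hFG]
  rw [hDM, ← hF2, ← hG2]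
  exact Finset.sum_mul_sq_le_sq_mul_sq s F G

end CS

theorem stmt9' {V : Type*} [Infinite V] (μ : V → V → ℝ) (hsymm : ∀ x y, μ x y = μ y x) (hnn : ∀ x y, 0 ≤ μ x y)
    (hfin : ∀ x : V, (Function.support (μ x)).Finite) (hdeg : ∀ x : V, 0 < deg μ x)
    (hconnG : ∀ x y : V, Relation.ReflTransGen (fun a b => μ a b ≠ 0) x y)
    (Ω : Finset V) (hcard : 2 ≤ Ω.card) :
    1 - Real.sqrt (1 - (cheeger μ Ω) ^ 2) ≤ lam1 μ Ω := by
  classical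
  have hΩ : Ω.Nonempty := Finset.card_pos.mp (by omega)
  have hch0 : 0 ≤ cheeger μ Ω := cheeger_nonneg μ hnn hfin hdeg Ω hΩ
  obtain ⟨f₀, hf₀⟩ := exists_lam1_eigfun μ hsymm hdeg Ω hΩ
  set l := lam1 μ Ω with hl
  have hl0 : 0 ≤ l := eig_nonneg μ Ω hsymm hnn hfin hdeg hf₀
  rcases le_or_gt 1 l with hcase | hcase
  · have := Real.sqrt_nonneg (1 - cheeger μ Ω ^ 2); linarith
  obtain ⟨f, hf, x₀, hx₀, hfx₀⟩ : ∃ f, IsDirEigfun μ Ω l f ∧ ∃ x ∈ Ω, 0 < f x := by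
    obtain ⟨⟨x, hx, hne⟩, hzero, heig⟩ := hf₀
    rcases lt_or_gt_of_ne hne with hneg | hpos
    · exact ⟨fun y => -f₀ y, neg_eigfun μ Ω ⟨⟨x, hx, hne⟩, hzero, heig⟩, x, hx, by
        simpa using hneg⟩
    · exact ⟨f₀, ⟨⟨x, hx, hne⟩, hzero, heig⟩, x, hx, hpos⟩
  obtain ⟨-, hzero, heig⟩ := hf
  have hg0 : ∀ x : V, 0 ≤ max (f x) 0 := fun x => le_max_right _ _
  have hgx₀ : max (f x₀) 0 ≠ 0 := by rw [max_eq_left hfx₀.le]; exact hfx₀.ne'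
  have hDpos : 0 < ∑ x ∈ Ω, deg μ x * (max (f x) 0) ^ 2 :=
    sum_deg_sq_pos μ Ω hdeg hx₀ hgx₀
  have hAle := pospart_bound μ Ω hnn hdeg heig
  have hA0 : 0 ≤ (∑ x ∈ Ω, deg μ x * (max (f x) 0) ^ 2)
      - ∑ x ∈ Ω, (max (f x) 0) * ∑ y ∈ Ω, μ x y * (max (f y) 0) := by
    rw [← expand_minus μ Ω (fun x => max (f x) 0) hsymm]
    refine add_nonneg (Finset.sum_nonneg fun x _ => Finset.sum_nonneg fun y _ =>
      mul_nonneg (by linarith [hnn x y]) (sq_nonneg _))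
      (Finset.sum_nonneg fun x _ => mul_nonneg
        (sub_nonneg.2 (sum_le_deg μ hnn hfin Ω x)) (sq_nonneg _))
  have hco := coarea μ hnn hfin hdeg Ω (fun x => max (f x) 0)
  have hCS := cs_bound μ Ω (fun x => max (f x) 0) hsymm hnn hfin hg0
  set D := ∑ x ∈ Ω, deg μ x * (max (f x) 0) ^ 2 with hD
  set E := ∑ x ∈ Ω, (max (f x) 0) * ∑ y ∈ Ω, μ x y * (max (f y) 0) with hE
  set M := ∑ x ∈ Ω, ∑ y ∈ Ω, μ x y * min ((max (f x) 0) ^ 2) ((max (f y) 0) ^ 2) with hM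
  have h1 : (cheeger μ Ω * D) ^ 2 ≤ (D - M) ^ 2 :=
    pow_le_pow_left₀ (mul_nonneg hch0 hDpos.le) hco 2
  have hfac : 0 ≤ (l * D - (D - E)) * (2 * D - (D - E) - l * D) :=
    mul_nonneg (by linarith) (by nlinarith)
  have h2 : (D - E) * (D + E) ≤ (l * D) * ((2 - l) * D) := by nlinarith [hfac]
  have h3 : cheeger μ Ω ^ 2 * D ^ 2 ≤ l * (2 - l) * D ^ 2 := by nlinarith [h1, hCS, h2]
  have hkey : cheeger μ Ω ^ 2 ≤ l * (2 - l) := by nlinarith [h3, mul_pos hDpos hDpos]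
  have hs : 1 - l ≤ Real.sqrt (1 - cheeger μ Ω ^ 2) := by
    rw [Real.le_sqrt (by linarith) (by nlinarith [sq_nonneg (1 - l)])]
    nlinarith [hkey]
  linarith

theorem stmt9 {V : Type*} [Infinite V] (μ : V → V → ℝ) (hsymm : ∀ x y, μ x y = μ y x) (hnn : ∀ x y, 0 ≤ μ x y)
    (hfin : ∀ x : V, (Function.support (μ x)).Finite) (hdeg : ∀ x : V, 0 < deg μ x)
    (hconnG : ∀ x y : V, Relation.ReflTransGen (fun a b => μ a b ≠ 0) x y)
    (Ω : Finset V) (hconn : ConnectedOn μ Ω) (hcard : 2 ≤ Ω.card) :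
    1 - Real.sqrt (1 - (cheeger μ Ω) ^ 2) ≤ lam1 μ Ω := by
  exact stmt9' μ hsymm hnn hfin hdeg hconnG Ω hcard
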